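/- Let α < 1 be real, let V : ℕ × ℕ → ℝ be weights, let (n_1,…,n_k) be positive integers with sum n and V(n,k) ≠ 0, and let 0 ≤ s ≤ m. Then binom(m,s) · ∑_{partitions {B_1,…,B_{k*}} of {1,…,s}} ∑_{(m_1,…,m_k)} ((m−s)!/(m_1!⋯m_k!)) · (V(n+m, k+k*)/V(n,k)) · ∏_{j=1}^k (n_j − α)_{m_j↑} · ∏_{i=1}^{k*} (1−α)_{|B_i|−1↑} = (1/V(n,k)) · binom(m,s) · (n − kα)_{m−s↑} · ∑_{k*=0}^{s} V(n+m, k+k*) · S_{s,k*}^{-1,-α}, where the outer sum ranges over all partitions of {1,…,s} into nonempty blocks (k* the number of blocks, with the empty partition for s = 0) and the inner sum over all k-tuples (m_1,…,m_k) of nonnegative integers with m_1 + ⋯ + m_k = m − s. -/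

import Mathlib

/-- Rising factorial `(x)_{n↑} = ∏_{i=0}^{n-1} (x + i)`. -/
noncomputable def risefac (x : ℝ) (n : ℕ) : ℝ := ∏ i ∈ Finset.range n, (x + i)

/-- Generalized Stirling number `S_{n,k}^{-1,-α} = (n!/k!) ∑ ∏_j (1-α)_{n_j-1↑}/n_j!`,
the sum over positive tuples `(n_1,…,n_k)` with sum `n`. -/
noncomputable def genStirling (α : ℝ) (n k : ℕ) : ℝ :=
  ((n.factorial : ℝ) / k.factorial) *
    ∑ f ∈ (Finset.Nat.antidiagonalTuple k n).filter (fun f => ∀ i, 0 < f i),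
      ∏ j, risefac (1 - α) (f j - 1) / (f j).factorial

/-- `P` is a partition of `{1,…,n}` (modeled as `Fin n`) into nonempty blocks. -/
def isSetPartition {n : ℕ} (P : Finset (Finset (Fin n))) : Prop :=
  ∅ ∉ P ∧ (∀ A ∈ P, ∀ B ∈ P, A ≠ B → Disjoint A B) ∧ P.sup id = Finset.univ

instance {n : ℕ} (P : Finset (Finset (Fin n))) : Decidable (isSetPartition P) := by
  unfold isSetPartition; infer_instance

/-- All partitions of `{1,…,n}` into nonempty blocks (for `n = 0` only the empty partition). -/
def allPartitions (n : ℕ) : Finset (Finset (Finset (Fin n))) :=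
  Finset.univ.filter (fun P => isSetPartition P)

section GibbsAux
open Finset


lemma risefac_zero (x : ℝ) : risefac x 0 = 1 := by simp [risefac]

lemma risefac_succ (x : ℝ) (n : ℕ) : risefac x (n+1) = risefac x n * (x + n) := by
  simp [risefac, Finset.prod_range_succ]

lemma vander2 (M : ℕ) (x y : ℝ) :
    ∑ i ∈ range (M+1), (M.choose i : ℝ) * risefac x i * risefac y (M - i)
      = risefac (x+y) M := by
  induction M with
  | zero => simp [risefac_zero]
  | succ M ih =>
    set f : ℕ → ℝ := fun i => (M.choose i : ℝ) * risefac x i * risefac y (M + 1 - i) with hf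
    have step1 : ∑ i ∈ range (M+2), ((M+1).choose i : ℝ) * risefac x i * risefac y (M + 1 - i)
        = (∑ i ∈ range (M+1), (M.choose i : ℝ) * risefac x (i+1) * risefac y (M - i))
          + ((∑ i ∈ range (M+1), f (i+1)) + f 0) := by
      rw [Finset.sum_range_succ' _ (M+1)]
      have h1 : ∀ k ∈ range (M+1),
          (((M+1).choose (k+1) : ℝ)) * risefac x (k+1) * risefac y (M+1-(k+1))
          = (M.choose k : ℝ) * risefac x (k+1) * risefac y (M-k) + f (k+1) := by
        intro k hk
        have h2 : M + 1 - (k+1) = M - k := by omega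
        rw [hf]
        simp only [h2, Nat.choose_succ_succ]
        push_cast; ring
      rw [Finset.sum_congr rfl h1, Finset.sum_add_distrib, add_assoc]
      simp [hf]
    have step2 : (∑ i ∈ range (M+1), f (i+1)) + f 0 = ∑ i ∈ range (M+1), f i := by
      rw [← Finset.sum_range_succ' f (M+1), Finset.sum_range_succ]
      simp [hf]
    rw [step1, step2, ← Finset.sum_add_distrib]
    have key : ∀ j ∈ range (M+1),
        (M.choose j : ℝ) * risefac x (j+1) * risefac y (M - j) + f j
        = ((x + y + M)) * ((M.choose j : ℝ) * risefac x j * risefac y (M - j)) := by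
      intro j hj
      have hjM : j ≤ M := by simp at hj; omega
      have h1 : M + 1 - j = (M - j) + 1 := by omega
      rw [hf]
      simp only [h1, risefac_succ]
      rw [Nat.cast_sub hjM]
      ring
    rw [Finset.sum_congr rfl key, ← Finset.mul_sum, ih, risefac_succ]
    ring



lemma risefac_zero_left {M : ℕ} (hM : 0 < M) : risefac 0 M = 0 := by
  apply Finset.prod_eq_zero (Finset.mem_range.mpr hM)
  simp

lemma vanderPi {ι : Type*} [DecidableEq ι] (t : Finset ι) (x : ι → ℝ) (M : ℕ) :
    ∑ f ∈ t.piAntidiag M, (Nat.multinomial t f : ℝ) * ∏ j ∈ t, risefac (x j) (f j)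
      = risefac (∑ j ∈ t, x j) M := by
  induction t using Finset.cons_induction generalizing M with
  | empty =>
    rcases Nat.eq_zero_or_pos M with rfl | hM
    · simp [risefac_zero]
    · rw [Finset.piAntidiag_empty_of_ne_zero (by omega)]
      simp [risefac_zero_left hM]
  | cons i s hi ih =>
    rw [Finset.piAntidiag_cons hi M, Finset.sum_disjiUnion]
    have inner : ∀ p ∈ Finset.HasAntidiagonal.antidiagonal M,
        (∑ f ∈ (s.piAntidiag p.2).map (addRightEmbedding fun t => if t = i then p.1 else 0),
          (Nat.multinomial (cons i s hi) f : ℝ) * ∏ j ∈ cons i s hi, risefac (x j) (f j))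
        = (M.choose p.1 : ℝ) * risefac (x i) p.1 * risefac (∑ j ∈ s, x j) p.2 := by
      intro p hp
      have hpM : p.1 + p.2 = M := Finset.HasAntidiagonal.mem_antidiagonal.mp hp
      rw [Finset.sum_map]
      have term : ∀ g ∈ s.piAntidiag p.2,
          (Nat.multinomial (cons i s hi) ((addRightEmbedding fun t => if t = i then p.1 else 0) g) : ℝ)
            * ∏ j ∈ cons i s hi, risefac (x j) (((addRightEmbedding fun t => if t = i then p.1 else 0) g) j)
          = (M.choose p.1 : ℝ) * risefac (x i) p.1
            * ((Nat.multinomial s g : ℝ) * ∏ j ∈ s, risefac (x j) (g j)) := by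
        intro g hg
        obtain ⟨hgsum, hgsupp⟩ := Finset.mem_piAntidiag.mp hg
        set F : ι → ℕ := (addRightEmbedding fun t => if t = i then p.1 else 0) g with hF
        have hgi : g i = 0 := by
          by_contra h
          exact hi (hgsupp i h)
        have hFi : F i = p.1 := by simp [hF, addRightEmbedding, hgi]
        have hFs : ∀ j ∈ s, F j = g j := by
          intro j hj
          have : j ≠ i := fun h => hi (h ▸ hj)
          simp [hF, addRightEmbedding, this]
        have hmult : Nat.multinomial (cons i s hi) F
            = (M.choose p.1) * Nat.multinomial s F := by
          rw [Nat.multinomial_cons]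
          congr 1
          rw [hFi, Finset.sum_congr rfl hFs, hgsum, hpM]
        rw [hmult, Nat.multinomial_congr hFs, Finset.prod_cons, hFi,
          Finset.prod_congr rfl (fun j hj => by rw [hFs j hj])]
        push_cast
        ring
      rw [Finset.sum_congr rfl term, ← Finset.mul_sum, ih]
    rw [Finset.sum_congr rfl inner, Finset.Nat.sum_antidiagonal_eq_sum_range_succ_mk,
      Finset.sum_cons]
    exact vander2 M (x i) (∑ j ∈ s, x j)



lemma multinomial_cast_eq {k : ℕ} (f : Fin k → ℕ) :
    (Nat.multinomial univ f : ℝ) = ((∑ i, f i).factorial : ℝ) / ∏ i, ((f i).factorial : ℝ) := by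
  have h := Nat.multinomial_spec (univ : Finset (Fin k)) f
  have hne : (∏ i, ((f i).factorial : ℝ)) ≠ 0 := by
    apply Finset.prod_ne_zero_iff.mpr
    intro i _
    exact_mod_cast (f i).factorial_pos.ne'
  field_simp
  rw [mul_comm]
  exact_mod_cast congrArg (Nat.cast : ℕ → ℝ) h

lemma vanderTuple (k M : ℕ) (x : Fin k → ℝ) :
    ∑ f ∈ Finset.Nat.antidiagonalTuple k M,
        ((M.factorial : ℝ) / ∏ j, ((f j).factorial : ℝ)) * ∏ j, risefac (x j) (f j)
      = risefac (∑ j, x j) M := by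
  rw [← Finset.piAntidiag_univ_fin_eq_antidiagonalTuple M k, ← vanderPi univ x M]
  apply Finset.sum_congr rfl
  intro f hf
  have hsum : ∑ i, f i = M := (Finset.mem_piAntidiag.mp hf).1
  rw [multinomial_cast_eq, hsum]


noncomputable def mR {k : ℕ} (f : Fin k → ℕ) : ℝ :=
  ((∑ i, f i).factorial : ℝ) / ∏ i, ((f i).factorial : ℝ)

def cnt {s k : ℕ} (g : Fin s → Fin k) (i : Fin k) : ℕ :=
  (Finset.univ.filter fun j => g j = i).card

lemma cnt_cons {s k : ℕ} (i₀ : Fin k) (g : Fin s → Fin k) (i : Fin k) :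
    cnt (Fin.cons i₀ g) i = cnt g i + (if i = i₀ then 1 else 0) := by
  unfold cnt
  rw [Finset.card_filter, Finset.card_filter, Fin.sum_univ_succ]
  simp only [Fin.cons_zero, Fin.cons_succ]
  rw [add_comm]
  congr 1
  rcases eq_or_ne i i₀ with h | h
  · simp [h]
  · rw [if_neg h, if_neg (Ne.symm h)]

lemma prod_fact_ne_zero {k : ℕ} (f : Fin k → ℕ) :
    (∏ i, ((f i).factorial : ℝ)) ≠ 0 := by
  apply Finset.prod_ne_zero_iff.mpr
  intro i _
  exact_mod_cast (f i).factorial_pos.ne'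

lemma gsum (k : ℕ) (s : ℕ) (w : Fin k → ℕ → ℝ) :
    ∑ g : Fin s → Fin k, ∏ i, w i (cnt g i)
      = ∑ f ∈ Finset.Nat.antidiagonalTuple k s, mR f * ∏ i, w i (f i) := by
  induction s generalizing w with
  | zero =>
    rw [Finset.Nat.antidiagonalTuple_zero_right, Finset.sum_singleton]
    have h1 : ∀ g ∈ (Finset.univ : Finset (Fin 0 → Fin k)),
        (∏ i, w i (cnt g i)) = ∏ i, w i 0 := by
      intro g _
      apply Finset.prod_congr rfl
      intro i _
      simp [cnt]
    rw [Finset.sum_congr rfl h1, Finset.sum_const, Finset.card_univ]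
    have : Fintype.card (Fin 0 → Fin k) = 1 := by simp
    rw [this, one_smul, mR]
    simp [Pi.zero_apply]
  | succ s ih =>
    -- LHS: split off the first coordinate
    have lhs_eq : ∑ g : Fin (s+1) → Fin k, ∏ i, w i (cnt g i)
        = ∑ i₀ : Fin k, ∑ g : Fin s → Fin k,
            ∏ i, w i (cnt g i + (if i = i₀ then 1 else 0)) := by
      rw [← Equiv.sum_comp (Fin.consEquiv (fun _ => Fin k))
        (fun g => ∏ i, w i (cnt g i)), Fintype.sum_prod_type]
      apply Finset.sum_congr rfl
      intro i₀ _
      apply Finset.sum_congr rfl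
      intro g _
      apply Finset.prod_congr rfl
      intro i _
      rw [show (Fin.consEquiv (fun _ => Fin k)) (i₀, g) = Fin.cons i₀ g from rfl,
        cnt_cons]
    rw [lhs_eq]
    have ihs : ∀ i₀ : Fin k, ∑ g : Fin s → Fin k,
          ∏ i, w i (cnt g i + (if i = i₀ then 1 else 0))
        = ∑ f ∈ Finset.Nat.antidiagonalTuple k s,
            mR f * ∏ i, w i (f i + (if i = i₀ then 1 else 0)) :=
      fun i₀ => ih (fun i t => w i (t + (if i = i₀ then 1 else 0)))
    rw [Finset.sum_congr rfl (fun i₀ _ => ihs i₀)]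
    -- RHS manipulation
    have rhs_eq : ∑ f ∈ Finset.Nat.antidiagonalTuple k (s+1), mR f * ∏ i, w i (f i)
        = ∑ i₀ : Fin k, ∑ f ∈ Finset.Nat.antidiagonalTuple k (s+1),
            ((f i₀ : ℝ)/(s+1)) * (mR f * ∏ i, w i (f i)) := by
      rw [Finset.sum_comm]
      apply Finset.sum_congr rfl
      intro f hf
      have hfs : ∑ i, f i = s + 1 := Finset.Nat.mem_antidiagonalTuple.mp hf
      rw [← Finset.sum_mul]
      have : (∑ i₀ : Fin k, ((f i₀ : ℝ)/(s+1))) = 1 := by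
        rw [← Finset.sum_div]
        rw [show (∑ i₀ : Fin k, (f i₀ : ℝ)) = ((s:ℝ)+1) by exact_mod_cast congrArg (Nat.cast : ℕ → ℝ) hfs]
        field_simp
      rw [this, one_mul]
    rw [rhs_eq]
    apply Finset.sum_congr rfl
    intro i₀ _
    -- per i₀ : reindex
    have drop : ∑ f ∈ Finset.Nat.antidiagonalTuple k (s+1),
          ((f i₀ : ℝ)/(s+1)) * (mR f * ∏ i, w i (f i))
        = ∑ f ∈ (Finset.Nat.antidiagonalTuple k (s+1)).filter (fun f => 0 < f i₀),
            ((f i₀ : ℝ)/(s+1)) * (mR f * ∏ i, w i (f i)) := by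
      symm
      apply Finset.sum_subset (Finset.filter_subset _ _)
      intro f hf hnf
      have : f i₀ = 0 := by
        by_contra h
        exact hnf (Finset.mem_filter.mpr ⟨hf, Nat.pos_of_ne_zero h⟩)
      rw [this]
      simp
    rw [drop]
    apply Finset.sum_nbij' (i := fun f' i => f' i + (if i = i₀ then 1 else 0))
      (j := fun f i => f i - (if i = i₀ then 1 else 0))
    · intro f' hf'
      have hfs : ∑ i, f' i = s := Finset.Nat.mem_antidiagonalTuple.mp hf'
      apply Finset.mem_filter.mpr
      constructor
      · apply Finset.Nat.mem_antidiagonalTuple.mpr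
        rw [Finset.sum_add_distrib, hfs, Finset.sum_ite_eq' Finset.univ i₀ (fun _ => 1)]
        simp
      · simp
    · intro f hf
      obtain ⟨hf1, hf2⟩ := Finset.mem_filter.mp hf
      have hfs : ∑ i, f i = s + 1 := Finset.Nat.mem_antidiagonalTuple.mp hf1
      apply Finset.Nat.mem_antidiagonalTuple.mpr
      have hle : ∀ i ∈ (Finset.univ : Finset (Fin k)), (if i = i₀ then 1 else 0) ≤ f i := by
        intro i _
        by_cases h : i = i₀ <;> simp [h]
        omega
      rw [Finset.sum_tsub_distrib _ hle, hfs, Finset.sum_ite_eq' Finset.univ i₀ (fun _ => 1)]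
      simp
    · intro f' hf'
      funext i
      simp
    · intro f hf
      obtain ⟨hf1, hf2⟩ := Finset.mem_filter.mp hf
      funext i
      by_cases h : i = i₀
      · subst h; simp; omega
      · simp [h]
    · intro f' hf'
      have hfs : ∑ i, f' i = s := Finset.Nat.mem_antidiagonalTuple.mp hf'
      set φ : Fin k → ℕ := fun i => f' i + (if i = i₀ then 1 else 0) with hφ
      have hφs : ∑ i, φ i = s + 1 := by
        rw [hφ]
        rw [Finset.sum_add_distrib, hfs, Finset.sum_ite_eq' Finset.univ i₀ (fun _ => 1)]
        simp
      have hφi₀ : φ i₀ = f' i₀ + 1 := by simp [hφ]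
      have hprod : (∏ i, ((φ i).factorial : ℝ))
          = ((f' i₀ : ℝ) + 1) * ∏ i, ((f' i).factorial : ℝ) := by
        rw [← Finset.mul_prod_erase Finset.univ (fun i => ((φ i).factorial : ℝ)) (Finset.mem_univ i₀),
          ← Finset.mul_prod_erase Finset.univ (fun i => ((f' i).factorial : ℝ)) (Finset.mem_univ i₀)]
        rw [hφi₀, Nat.factorial_succ]
        have : ∀ i ∈ Finset.univ.erase i₀, ((φ i).factorial : ℝ) = ((f' i).factorial : ℝ) := by
          intro i hi
          have h : i ≠ i₀ := (Finset.mem_erase.mp hi).1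
          simp [hφ, h]
        rw [Finset.prod_congr rfl this]
        push_cast
        ring
      have hwprod : (∏ i, w i (φ i)) = ∏ i, w i (f' i + (if i = i₀ then 1 else 0)) := rfl
      rw [mR, mR, hφs, hφi₀, hfs, hprod]
      rw [Nat.factorial_succ]
      have h1 : (∏ i, ((f' i).factorial : ℝ)) ≠ 0 := prod_fact_ne_zero f'
      have h2 : ((f' i₀ : ℝ) + 1) ≠ 0 := by positivity
      have h3 : ((s : ℝ) + 1) ≠ 0 := by positivity
      rw [← hwprod]
      push_cast
      field_simp







def fib {s k : ℕ} (g : Fin s → Fin k) (i : Fin k) : Finset (Fin s) :=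
  Finset.univ.filter fun j => g j = i

def pt {s k : ℕ} (g : Fin s → Fin k) : Finset (Finset (Fin s)) :=
  Finset.image (fib g) Finset.univ

lemma fib_card {s k : ℕ} (g : Fin s → Fin k) (i : Fin k) : (fib g i).card = cnt g i := rfl

lemma mem_fib {s k : ℕ} {g : Fin s → Fin k} {i : Fin k} {x : Fin s} :
    x ∈ fib g i ↔ g x = i := by simp [fib]

lemma fib_injective {s k : ℕ} {g : Fin s → Fin k} (hg : ∀ i, 0 < cnt g i) :
    Function.Injective (fib g) := by
  intro i i' h
  obtain ⟨x, hx⟩ := Finset.card_pos.mp (hg i)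
  have hxf : x ∈ fib g i := hx
  have hx' : x ∈ fib g i' := h ▸ hxf
  rw [mem_fib] at hxf hx'
  rw [← hxf, hx']

lemma pt_mem {s k : ℕ} {g : Fin s → Fin k} (hg : ∀ i, 0 < cnt g i) :
    pt g ∈ (allPartitions s).filter (fun P => P.card = k) := by
  rw [Finset.mem_filter]
  constructor
  · rw [allPartitions, Finset.mem_filter]
    refine ⟨Finset.mem_univ _, ?_, ?_, ?_⟩
    · intro h
      obtain ⟨i, -, hi⟩ := Finset.mem_image.mp h
      have := hg i
      rw [← fib_card, hi] at this
      simp at this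
    · intro A hA B hB hAB
      obtain ⟨i, -, rfl⟩ := Finset.mem_image.mp hA
      obtain ⟨i', -, rfl⟩ := Finset.mem_image.mp hB
      have hii' : i ≠ i' := fun h => hAB (by rw [h])
      rw [Finset.disjoint_left]
      intro x hx hx'
      rw [mem_fib] at hx hx'
      exact hii' (hx ▸ hx')
    · apply Finset.eq_univ_of_forall
      intro x
      rw [Finset.mem_sup]
      exact ⟨fib g (g x), Finset.mem_image_of_mem _ (Finset.mem_univ _), mem_fib.mpr rfl⟩
  · rw [pt, Finset.card_image_of_injective _ (fib_injective hg), Finset.card_univ,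
      Fintype.card_fin]

lemma partition_exu {s : ℕ} {P : Finset (Finset (Fin s))} (hP : P ∈ allPartitions s)
    (x : Fin s) : ∃! A, A ∈ P ∧ x ∈ A := by
  obtain ⟨-, hne, hdisj, hsup⟩ :
      True ∧ ∅ ∉ P ∧ (∀ A ∈ P, ∀ B ∈ P, A ≠ B → Disjoint A B) ∧ P.sup id = Finset.univ := by
    rw [allPartitions, Finset.mem_filter] at hP
    exact ⟨trivial, hP.2⟩
  have hx : x ∈ P.sup id := hsup ▸ Finset.mem_univ x
  obtain ⟨A, hA, hxA⟩ := Finset.mem_sup.mp hx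
  refine ⟨A, ⟨hA, hxA⟩, ?_⟩
  rintro B ⟨hB, hxB⟩
  by_contra h
  exact (Finset.disjoint_left.mp (hdisj B hB A hA h) hxB) hxA

lemma fiber_count {s k : ℕ} {P : Finset (Finset (Fin s))}
    (hP : P ∈ (allPartitions s).filter (fun P => P.card = k)) :
    (Finset.univ.filter
        (fun g : Fin s → Fin k => (∀ i, 0 < cnt g i) ∧ pt g = P)).card
      = k.factorial := by
  obtain ⟨hP1, hPcard⟩ := Finset.mem_filter.mp hP
  have hempty : ∅ ∉ P := by
    rw [allPartitions, Finset.mem_filter] at hP1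
    exact hP1.2.1
  have hcardP : Fintype.card {A // A ∈ P} = k := by
    rw [Fintype.card_coe, hPcard]
  have hex := partition_exu hP1
  set blk : Fin s → Finset (Fin s) := fun x => P.choose (fun A => x ∈ A) (hex x) with hblk
  have hblkmem : ∀ x, blk x ∈ P := fun x => Finset.choose_mem (fun A => x ∈ A) P (hex x)
  have hblkx : ∀ x, x ∈ blk x := fun x => Finset.choose_property (fun A => x ∈ A) P (hex x)
  have hblkeq : ∀ x A, A ∈ P → x ∈ A → blk x = A := fun x A hA hxA =>
    (hex x).unique ⟨hblkmem x, hblkx x⟩ ⟨hA, hxA⟩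
  set jmap : (Fin k ≃ {A // A ∈ P}) → (Fin s → Fin k) :=
    fun e x => e.symm ⟨blk x, hblkmem x⟩ with hjmap
  have hfib : ∀ (e : Fin k ≃ {A // A ∈ P}) (i : Fin k),
      fib (jmap e) i = ((e i : Finset (Fin s))) := by
    intro e i
    ext x
    rw [mem_fib]
    constructor
    · intro h
      have h2 : (⟨blk x, hblkmem x⟩ : {A // A ∈ P}) = e i := by
        rw [← h, hjmap]
        simp
      have hb : blk x = (e i : Finset (Fin s)) := congrArg Subtype.val h2
      exact hb ▸ hblkx x
    · intro hx
      have hb : blk x = (e i : Finset (Fin s)) := hblkeq x _ (e i).2 hx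
      show e.symm ⟨blk x, hblkmem x⟩ = i
      rw [show (⟨blk x, hblkmem x⟩ : {A // A ∈ P}) = e i from Subtype.ext hb]
      simp
  have hjmem : ∀ e : Fin k ≃ {A // A ∈ P},
      (∀ i, 0 < cnt (jmap e) i) ∧ pt (jmap e) = P := by
    intro e
    constructor
    · intro i
      rw [← fib_card, hfib]
      apply Finset.card_pos.mpr
      apply Finset.nonempty_iff_ne_empty.mpr
      intro h
      exact hempty (h ▸ (e i).2)
    · rw [pt]
      apply Finset.ext
      intro A
      rw [Finset.mem_image]
      constructor
      · rintro ⟨i, -, rfl⟩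
        rw [hfib]
        exact (e i).2
      · intro hA
        refine ⟨e.symm ⟨A, hA⟩, Finset.mem_univ _, ?_⟩
        rw [hfib]
        simp
  have hbij : ∀ (g : Fin s → Fin k) (hg : ∀ i, 0 < cnt g i) (hpt : pt g = P),
      Function.Bijective (fun i : Fin k =>
        (⟨fib g i, by rw [← hpt]; exact Finset.mem_image_of_mem _ (Finset.mem_univ i)⟩
          : {A // A ∈ P})) := by
    intro g hg hpt
    apply (Fintype.bijective_iff_injective_and_card _).mpr
    constructor
    · intro i i' h
      exact fib_injective hg (congrArg Subtype.val h)
    · rw [hcardP, Fintype.card_fin]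
  rw [show k.factorial = (Finset.univ : Finset (Fin k ≃ {A // A ∈ P})).card by
    rw [Finset.card_univ, Fintype.card_equiv (Fintype.equivOfCardEq (by rw [hcardP, Fintype.card_fin])), Fintype.card_fin]]
  refine Finset.card_bij'
    (fun g hg => Equiv.ofBijective _
      (hbij g (Finset.mem_filter.mp hg).2.1 ((Finset.mem_filter.mp hg)).2.2))
    (fun e _ => jmap e) ?_ ?_ ?_ ?_
  · intro g hg
    exact Finset.mem_univ _
  · intro e _
    exact Finset.mem_filter.mpr ⟨Finset.mem_univ _, hjmem e⟩
  · intro g hg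
    obtain ⟨-, hg1, hg2⟩ : g ∈ Finset.univ ∧ (∀ i, 0 < cnt g i) ∧ pt g = P :=
      by simpa using Finset.mem_filter.mp hg
    funext x
    simp only [hjmap]
    rw [Equiv.symm_apply_eq, Equiv.ofBijective_apply]
    apply Subtype.ext
    apply hblkeq
    · exact Finset.coe_mem _
    · exact mem_fib.mpr rfl
  · intro e _
    apply Equiv.ext
    intro i
    apply Subtype.ext
    show fib (jmap e) i = (e i : Finset (Fin s))
    exact hfib e i





lemma surj_sum (α : ℝ) (s k : ℕ) :
    ∑ g ∈ Finset.univ.filter (fun g : Fin s → Fin k => ∀ i, 0 < cnt g i),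
        ∏ i, risefac (1 - α) (cnt g i - 1)
      = ∑ f ∈ (Finset.Nat.antidiagonalTuple k s).filter (fun f => ∀ i, 0 < f i),
          mR f * ∏ i, risefac (1 - α) (f i - 1) := by
  have w0 : Fin k → ℕ → ℝ := fun _ t => if t = 0 then 0 else risefac (1 - α) (t - 1)
  calc ∑ g ∈ Finset.univ.filter (fun g : Fin s → Fin k => ∀ i, 0 < cnt g i),
        ∏ i, risefac (1 - α) (cnt g i - 1)
      = ∑ g : Fin s → Fin k,
          ∏ i, (if cnt g i = 0 then 0 else risefac (1 - α) (cnt g i - 1)) := by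
        symm
        rw [← Finset.sum_filter_of_ne (p := fun g : Fin s → Fin k => ∀ i, 0 < cnt g i)]
        · apply Finset.sum_congr rfl
          intro g hg
          have hg' : ∀ i, 0 < cnt g i := (Finset.mem_filter.mp hg).2
          apply Finset.prod_congr rfl
          intro i _
          rw [if_neg (Nat.pos_iff_ne_zero.mp (hg' i))]
        · intro g _ hne i
          by_contra h
          apply hne
          apply Finset.prod_eq_zero (Finset.mem_univ i)
          rw [if_pos (by omega)]
    _ = ∑ f ∈ Finset.Nat.antidiagonalTuple k s,
          mR f * ∏ i, (if f i = 0 then 0 else risefac (1 - α) (f i - 1)) :=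
        gsum k s (fun _ t => if t = 0 then 0 else risefac (1 - α) (t - 1))
    _ = ∑ f ∈ (Finset.Nat.antidiagonalTuple k s).filter (fun f => ∀ i, 0 < f i),
          mR f * ∏ i, risefac (1 - α) (f i - 1) := by
        rw [← Finset.sum_filter_of_ne (p := fun f : Fin k → ℕ => ∀ i, 0 < f i)]
        · apply Finset.sum_congr rfl
          intro f hf
          have hf' : ∀ i, 0 < f i := (Finset.mem_filter.mp hf).2
          congr 1
          apply Finset.prod_congr rfl
          intro i _
          rw [if_neg (Nat.pos_iff_ne_zero.mp (hf' i))]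
        · intro f _ hne i
          by_contra h
          apply hne
          rw [mul_eq_zero]
          right
          apply Finset.prod_eq_zero (Finset.mem_univ i)
          rw [if_pos (by omega)]

lemma partition_sum (α : ℝ) (s k : ℕ) :
    (k.factorial : ℝ) * ∑ P ∈ (allPartitions s).filter (fun P => P.card = k),
        ∏ A ∈ P, risefac (1 - α) (A.card - 1)
      = ∑ f ∈ (Finset.Nat.antidiagonalTuple k s).filter (fun f => ∀ i, 0 < f i),
          mR f * ∏ i, risefac (1 - α) (f i - 1) := by
  rw [← surj_sum α s k]
  rw [← Finset.sum_fiberwise_of_maps_to (g := pt)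
    (t := (allPartitions s).filter (fun P => P.card = k))
    (fun g hg => pt_mem (Finset.mem_filter.mp hg).2)]
  rw [Finset.mul_sum]
  apply Finset.sum_congr rfl
  intro P hP
  have hinner : ∀ g ∈ (Finset.univ.filter
        (fun g : Fin s → Fin k => ∀ i, 0 < cnt g i)).filter (fun g => pt g = P),
      (∏ i, risefac (1 - α) (cnt g i - 1)) = ∏ A ∈ P, risefac (1 - α) (A.card - 1) := by
    intro g hg
    obtain ⟨hg1, hg2⟩ := Finset.mem_filter.mp hg
    have hgpos : ∀ i, 0 < cnt g i := (Finset.mem_filter.mp hg1).2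
    rw [← hg2, pt, Finset.prod_image (by
      intro i _ i' _ h
      exact fib_injective hgpos h)]
    apply Finset.prod_congr rfl
    intro i _
    rw [fib_card]
  rw [Finset.sum_congr rfl hinner, Finset.sum_const]
  rw [Finset.filter_filter]
  rw [fiber_count hP]
  simp [mul_comm]

lemma partition_sum_eq_genStirling (α : ℝ) (s k : ℕ) :
    ∑ P ∈ (allPartitions s).filter (fun P => P.card = k),
        ∏ A ∈ P, risefac (1 - α) (A.card - 1)
      = genStirling α s k := by
  have hk : (k.factorial : ℝ) ≠ 0 := by exact_mod_cast k.factorial_pos.ne'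
  apply mul_left_cancel₀ hk
  rw [partition_sum α s k, genStirling]
  rw [Finset.mul_sum, Finset.mul_sum]
  apply Finset.sum_congr rfl
  intro f hf
  obtain ⟨hf1, hf2⟩ := Finset.mem_filter.mp hf
  have hfs : ∑ i, f i = s := Finset.Nat.mem_antidiagonalTuple.mp hf1
  rw [mR, hfs, Finset.prod_div_distrib]
  have h1 := prod_fact_ne_zero f
  field_simp

lemma card_le_of_partition {s : ℕ} {P : Finset (Finset (Fin s))}
    (hP : P ∈ allPartitions s) : P.card ≤ s := by
  obtain ⟨hne, hdisj, hsup⟩ : ∅ ∉ P ∧ (∀ A ∈ P, ∀ B ∈ P, A ≠ B → Disjoint A B)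
      ∧ P.sup id = Finset.univ := by
    rw [allPartitions, Finset.mem_filter] at hP
    exact hP.2
  have h1 : P.card = ∑ _A ∈ P, 1 := by simp
  have h2 : ∑ _A ∈ P, 1 ≤ ∑ A ∈ P, A.card := by
    apply Finset.sum_le_sum
    intro A hA
    have : A ≠ ∅ := fun h => hne (h ▸ hA)
    exact Nat.one_le_iff_ne_zero.mpr (fun hc => this (Finset.card_eq_zero.mp hc))
  have h3 : (P.biUnion (fun A => A)).card = ∑ A ∈ P, A.card :=
    Finset.card_biUnion (fun A hA B hB hAB => hdisj A hA B hB hAB)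
  have h4 : P.biUnion (fun A => A) = Finset.univ := by
    rw [show (fun (A : Finset (Fin s)) => A) = id from rfl, ← Finset.sup_eq_biUnion, hsup]
  rw [h4] at h3
  simp only [Finset.card_univ, Fintype.card_fin] at h3
  omega


end GibbsAux

/-- Joint distribution of the number of new tables and the allocation at old tables for a
Gibbs partition of type `α`:
`binom(m,s) ∑_P ∑_{(m_1,…,m_k)} ((m−s)!/(m_1!⋯m_k!)) (V(n+m,k+k*)/V(n,k))
  ∏_j (n_j−α)_{m_j↑} ∏_i (1−α)_{|B_i|−1↑}
  = (1/V(n,k)) binom(m,s) (n−kα)_{m−s↑} ∑_{k*=0}^s V(n+m,k+k*) S_{s,k*}^{-1,-α}`,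
where `P = {B_1,…,B_{k*}}` runs over partitions of `{1,…,s}` and `(m_1,…,m_k)` over
nonnegative tuples with sum `m−s`. -/
theorem gibbs_joint_new_old (α : ℝ) (hα : α < 1) (V : ℕ → ℕ → ℝ)
    (k : ℕ) (nvec : Fin k → ℕ) (hpos : ∀ j, 0 < nvec j)
    (n : ℕ) (hsum : ∑ j, nvec j = n) (hVn : V n k ≠ 0)
    (s m : ℕ) (hsm : s ≤ m) :
    (m.choose s : ℝ) *
        ∑ P ∈ allPartitions s, ∑ f ∈ Finset.Nat.antidiagonalTuple k (m - s),
          (((m - s).factorial : ℝ) / ∏ j, ((f j).factorial : ℝ)) *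
            (V (n + m) (k + P.card) / V n k) *
            (∏ j, risefac ((nvec j : ℝ) - α) (f j)) *
            ∏ A ∈ P, risefac (1 - α) (A.card - 1)
      = (1 / V n k) * (m.choose s : ℝ) * risefac ((n : ℝ) - k * α) (m - s) *
          ∑ kstar ∈ Finset.range (s + 1), V (n + m) (k + kstar) * genStirling α s kstar := by
  classical
  have h1 : ∀ P ∈ allPartitions s,
      (∑ f ∈ Finset.Nat.antidiagonalTuple k (m - s),
          (((m - s).factorial : ℝ) / ∏ j, ((f j).factorial : ℝ)) *
            (V (n + m) (k + P.card) / V n k) *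
            (∏ j, risefac ((nvec j : ℝ) - α) (f j)) *
            ∏ A ∈ P, risefac (1 - α) (A.card - 1))
      = (∑ f ∈ Finset.Nat.antidiagonalTuple k (m - s),
          (((m - s).factorial : ℝ) / ∏ j, ((f j).factorial : ℝ)) *
            ∏ j, risefac ((nvec j : ℝ) - α) (f j)) *
          ((V (n + m) (k + P.card) / V n k) * ∏ A ∈ P, risefac (1 - α) (A.card - 1)) := by
    intro P _
    rw [Finset.sum_mul]
    apply Finset.sum_congr rfl
    intro f _
    ring
  rw [Finset.sum_congr rfl h1, ← Finset.mul_sum]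
  have hx : (∑ j, ((nvec j : ℝ) - α)) = (n : ℝ) - k * α := by
    rw [Finset.sum_sub_distrib, Finset.sum_const, Finset.card_univ, Fintype.card_fin]
    have : (∑ j, (nvec j : ℝ)) = (n : ℝ) := by exact_mod_cast congrArg (Nat.cast : ℕ → ℝ) hsum
    rw [this, nsmul_eq_mul]
  rw [vanderTuple k (m - s) (fun j => (nvec j : ℝ) - α), hx]
  have h2 : (∑ P ∈ allPartitions s,
        (V (n + m) (k + P.card) / V n k) * ∏ A ∈ P, risefac (1 - α) (A.card - 1))
      = ∑ kstar ∈ Finset.range (s + 1),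
          (V (n + m) (k + kstar) / V n k) * genStirling α s kstar := by
    rw [← Finset.sum_fiberwise_of_maps_to (g := Finset.card) (t := Finset.range (s + 1))
      (fun P hP => Finset.mem_range.mpr (Nat.lt_succ_of_le (card_le_of_partition hP)))]
    apply Finset.sum_congr rfl
    intro kstar _
    rw [← partition_sum_eq_genStirling α s kstar, Finset.mul_sum]
    apply Finset.sum_congr rfl
    intro P hP
    rw [(Finset.mem_filter.mp hP).2]
  rw [h2]
  rw [show (∑ kstar ∈ Finset.range (s + 1),
        (V (n + m) (k + kstar) / V n k) * genStirling α s kstar)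
      = (∑ kstar ∈ Finset.range (s + 1),
        V (n + m) (k + kstar) * genStirling α s kstar) / V n k by
    rw [Finset.sum_div]
    apply Finset.sum_congr rfl
    intro kstar _
    ring]
  field_simp
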